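/- Let λ > 0 and s̃ ≥ 1 be an integer, and suppose x* is a minimizer of φ_λ over ℝⁿ with ‖x*_{S̄ᶜ}‖₀ ≤ s̃. Then for every x ∈ ℝⁿ with ‖x_{S̄ᶜ}‖₀ ≤ s̃, we have φ_λ(x) − φ_λ(x*) ≥ (ρ₋(A, s̄+2s̃)/2) · ‖x − x*‖₂². -/
import Mathlib


open scoped BigOperators
open Matrix

noncomputable section

namespace PGH

/-- Euclidean dot product on `Fin n → ℝ`. -/
def dot {n : ℕ} (x y : Fin n → ℝ) : ℝ := ∑ i, x i * y i

/-- Squared Euclidean norm. -/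
def sqnorm {n : ℕ} (x : Fin n → ℝ) : ℝ := ∑ i, (x i) ^ 2

/-- Euclidean (ℓ₂) norm. -/
noncomputable def l2 {n : ℕ} (x : Fin n → ℝ) : ℝ := Real.sqrt (sqnorm x)

/-- ℓ₁ norm. -/
def l1 {n : ℕ} (x : Fin n → ℝ) : ℝ := ∑ i, |x i|

/-- ℓ∞ norm (maximum absolute coordinate). -/
noncomputable def linf {n : ℕ} (x : Fin n → ℝ) : ℝ := ⨆ i, |x i|

/-- Support of a vector. -/
def supp {n : ℕ} (x : Fin n → ℝ) : Finset (Fin n) := Finset.univ.filter (fun i => x i ≠ 0)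

/-- Number of nonzero coordinates. -/
def l0 {n : ℕ} (x : Fin n → ℝ) : ℕ := (supp x).card

/-- Number of nonzero coordinates within the index set `S`
(i.e. `‖x_S‖₀` for the restriction of `x` to `S`). -/
def l0on {n : ℕ} (S : Finset (Fin n)) (x : Fin n → ℝ) : ℕ :=
  (S.filter (fun i => x i ≠ 0)).card

/-- ℓ₁ norm of the restriction of `x` to the index set `S`. -/
def l1on {n : ℕ} (S : Finset (Fin n)) (x : Fin n → ℝ) : ℝ := ∑ i ∈ S, |x i|

/-- Gradient of `f(x) = (1/2)‖Ax - b‖₂²`, namely `Aᵀ(Ax - b)`. -/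
def grad {m n : ℕ} (A : Matrix (Fin m) (Fin n) ℝ) (b : Fin m → ℝ) (x : Fin n → ℝ) :
    Fin n → ℝ :=
  Aᵀ.mulVec (A.mulVec x - b)

/-- Least-squares objective `f(x) = (1/2)‖Ax - b‖₂²`. -/
def fls {m n : ℕ} (A : Matrix (Fin m) (Fin n) ℝ) (b : Fin m → ℝ) (x : Fin n → ℝ) : ℝ :=
  sqnorm (A.mulVec x - b) / 2

/-- ℓ₁-regularized least-squares objective `φ_λ(x) = f(x) + λ‖x‖₁`. -/
def phi {m n : ℕ} (A : Matrix (Fin m) (Fin n) ℝ) (b : Fin m → ℝ) (lam : ℝ)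
    (x : Fin n → ℝ) : ℝ :=
  fls A b x + lam * l1 x

/-- Restricted maximal eigenvalue `ρ₊(A, s)`. -/
noncomputable def rhoPlus {m n : ℕ} (A : Matrix (Fin m) (Fin n) ℝ) (s : ℕ) : ℝ :=
  sSup {r | ∃ x : Fin n → ℝ, x ≠ 0 ∧ l0 x ≤ s ∧ r = sqnorm (A.mulVec x) / sqnorm x}

/-- Restricted minimal eigenvalue `ρ₋(A, s)`. -/
noncomputable def rhoMinus {m n : ℕ} (A : Matrix (Fin m) (Fin n) ℝ) (s : ℕ) : ℝ :=
  sInf {r | ∃ x : Fin n → ℝ, x ≠ 0 ∧ l0 x ≤ s ∧ r = sqnorm (A.mulVec x) / sqnorm x}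

/-- `ξ` is a subgradient of the ℓ₁ norm at `x`. -/
def IsSubgrad {n : ℕ} (x ξ : Fin n → ℝ) : Prop :=
  ∀ i, (x i ≠ 0 → ξ i = Real.sign (x i)) ∧ (x i = 0 → |ξ i| ≤ 1)

/-- Optimality residue `ω_λ(x) = min_{ξ ∈ ∂‖x‖₁} ‖Aᵀ(Ax−b) + λξ‖_∞`. -/
noncomputable def omega {m n : ℕ} (A : Matrix (Fin m) (Fin n) ℝ) (b : Fin m → ℝ)
    (lam : ℝ) (x : Fin n → ℝ) : ℝ :=
  sInf {r | ∃ ξ : Fin n → ℝ, IsSubgrad x ξ ∧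
    r = linf (fun i => grad A b x i + lam * ξ i)}

/-- The local model `ψ_{λ,L}(y; x)`. -/
def psi {m n : ℕ} (A : Matrix (Fin m) (Fin n) ℝ) (b : Fin m → ℝ) (lam L : ℝ)
    (y x : Fin n → ℝ) : ℝ :=
  fls A b y + dot (grad A b y) (x - y) + L / 2 * sqnorm (x - y) + lam * l1 x

/-- The noise-domination condition
`λ ≥ max{4, (γ+1)/((1−δ')γ−(1+δ'))} ⬝ ‖Aᵀz‖_∞`. -/
def noiseCond {m n : ℕ} (A : Matrix (Fin m) (Fin n) ℝ) (z : Fin m → ℝ)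
    (dp gam lam : ℝ) : Prop :=
  lam ≥ max 4 ((gam + 1) / ((1 - dp) * gam - (1 + dp))) * linf (Aᵀ.mulVec z)

lemma sqnorm_nonneg' {n : ℕ} (x : Fin n → ℝ) : 0 ≤ sqnorm x :=
  Finset.sum_nonneg fun _ _ => sq_nonneg _

lemma sqnorm_add' {n : ℕ} (u v : Fin n → ℝ) :
    sqnorm (u + v) = sqnorm u + 2 * dot u v + sqnorm v := by
  simp only [sqnorm, dot, Pi.add_apply]
  rw [Finset.mul_sum, ← Finset.sum_add_distrib, ← Finset.sum_add_distrib]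
  exact Finset.sum_congr rfl fun i _ => by ring

lemma sqnorm_smul' {n : ℕ} (t : ℝ) (v : Fin n → ℝ) : sqnorm (t • v) = t ^ 2 * sqnorm v := by
  simp only [sqnorm, Pi.smul_apply, smul_eq_mul, Finset.mul_sum]
  exact Finset.sum_congr rfl fun i _ => by ring

lemma dot_smul_right' {n : ℕ} (t : ℝ) (u v : Fin n → ℝ) : dot u (t • v) = t * dot u v := by
  simp only [dot, Pi.smul_apply, smul_eq_mul, Finset.mul_sum]
  exact Finset.sum_congr rfl fun i _ => by ring

lemma fls_expand' {m n : ℕ} (A : Matrix (Fin m) (Fin n) ℝ) (b : Fin m → ℝ)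
    (x h : Fin n → ℝ) (t : ℝ) :
    fls A b (x + t • h) = fls A b x + t * dot (A.mulVec x - b) (A.mulVec h)
      + t ^ 2 / 2 * sqnorm (A.mulVec h) := by
  have hm : A.mulVec (x + t • h) - b = (A.mulVec x - b) + t • A.mulVec h := by
    rw [Matrix.mulVec_add, Matrix.mulVec_smul]; abel
  rw [fls, hm, sqnorm_add', dot_smul_right', sqnorm_smul', fls]; ring

lemma l1_conv' {n : ℕ} (u v : Fin n → ℝ) (t : ℝ) (h0 : 0 ≤ t) (h1 : t ≤ 1) :
    l1 (u + t • (v - u)) ≤ (1 - t) * l1 u + t * l1 v := by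
  simp only [l1, Finset.mul_sum, ← Finset.sum_add_distrib]
  refine Finset.sum_le_sum fun i _ => ?_
  have he : u i + t * (v i - u i) = (1 - t) * u i + t * v i := by ring
  simp only [Pi.add_apply, Pi.smul_apply, Pi.sub_apply, smul_eq_mul, he]
  calc |(1 - t) * u i + t * v i| ≤ |(1 - t) * u i| + |t * v i| := abs_add_le _ _
    _ = (1 - t) * |u i| + t * |v i| := by
        rw [abs_mul, abs_mul, abs_of_nonneg (by linarith), abs_of_nonneg h0]

theorem stmt9 {m n : ℕ} (A : Matrix (Fin m) (Fin n) ℝ) (b : Fin m → ℝ)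
    (S : Finset (Fin n)) (lam : ℝ) (hlam : 0 < lam) (st : ℕ) (hst : 1 ≤ st)
    (xstar : Fin n → ℝ) (hmin : ∀ u, phi A b lam xstar ≤ phi A b lam u)
    (hsp : l0on Sᶜ xstar ≤ st)
    (x : Fin n → ℝ) (hx : l0on Sᶜ x ≤ st) :
    phi A b lam x - phi A b lam xstar ≥
      rhoMinus A (S.card + 2 * st) / 2 * sqnorm (x - xstar) := by
  set h := x - xstar with hh
  set c : ℝ := dot (A.mulVec xstar - b) (A.mulVec h) with hc
  set Q : ℝ := sqnorm (A.mulVec h) with hQ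
  set D : ℝ := l1 x - l1 xstar with hD
  clear_value h
  have hQ0 : 0 ≤ Q := sqnorm_nonneg' _
  clear_value c Q D
  have hx1 : xstar + (1 : ℝ) • h = x := by simp [hh]
  -- first-order optimality: c + lam * D ≥ 0
  have hkey : 0 ≤ c + lam * D := by
    by_contra hneg
    push_neg at hneg
    set ε : ℝ := -(c + lam * D) with hε
    have hεpos : 0 < ε := by simp only [hε]; linarith
    set t : ℝ := min 1 (ε / (Q + 1)) with ht
    have htpos : 0 < t := lt_min one_pos (div_pos hεpos (by linarith))
    have ht1 : t ≤ 1 := min_le_left _ _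
    have hmono : 0 ≤ phi A b lam (xstar + t • h) - phi A b lam xstar := by
      linarith [hmin (xstar + t • h)]
    have hl1 : l1 (xstar + t • h) ≤ (1 - t) * l1 xstar + t * l1 x := by
      have := l1_conv' xstar x t htpos.le ht1
      simpa [hh] using this
    have hf : fls A b (xstar + t • h)
        = fls A b xstar + t * c + t ^ 2 / 2 * Q := by
      rw [hc, hQ]; exact fls_expand' A b xstar h t
    have hphi : phi A b lam (xstar + t • h) - phi A b lam xstar
        ≤ t * (c + lam * D) + t ^ 2 / 2 * Q := by
      simp only [phi, hf]
      have : lam * l1 (xstar + t • h) ≤ lam * ((1 - t) * l1 xstar + t * l1 x) :=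
        mul_le_mul_of_nonneg_left hl1 hlam.le
      simp only [hD]
      nlinarith
    -- t ≤ ε/(Q+1) so t * Q < ε ... derive contradiction
    have htQ : t * Q < ε := by
      have h2 : t ≤ ε / (Q + 1) := min_le_right _ _
      have : t * (Q + 1) ≤ ε := by
        rw [← le_div_iff₀ (by linarith : (0:ℝ) < Q + 1)] ; exact h2
      nlinarith
    have : 0 ≤ t * (c + lam * D) + t ^ 2 / 2 * Q := le_trans hmono hphi
    have h3 : t * (c + lam * D) = -(t * ε) := by rw [hε]; ring
    clear_value t ε
    nlinarith [mul_lt_mul_of_pos_left htQ htpos, mul_pos htpos hεpos,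
      mul_le_mul_of_nonneg_right ht1 (mul_nonneg htpos.le hQ0)]
  -- quadratic lower bound
  have hdiff : phi A b lam x - phi A b lam xstar = c + lam * D + Q / 2 := by
    have := fls_expand' A b xstar h 1
    rw [hx1] at this
    simp only [phi, this, hD, hc, hQ]; ring
  have hge : phi A b lam x - phi A b lam xstar ≥ Q / 2 := by
    rw [hdiff]; linarith
  -- support bound on h
  by_cases hz : h = 0
  · have : sqnorm h = 0 := by simp [hz, sqnorm]
    rw [this, mul_zero]
    linarith [hmin x]
  · have hsq : 0 < sqnorm h := by
      rcases lt_or_eq_of_le (sqnorm_nonneg' h) with hlt | heq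
      · exact hlt
      · exfalso; apply hz
        funext i
        have hzero : ∀ j ∈ Finset.univ, (h j) ^ 2 = 0 := by
          intro j _
          exact (Finset.sum_eq_zero_iff_of_nonneg (fun k _ => sq_nonneg (h k))).mp
            heq.symm j (Finset.mem_univ j)
        have := hzero i (Finset.mem_univ i)
        exact pow_eq_zero_iff (by norm_num) |>.mp this
    have hl0 : l0 h ≤ S.card + 2 * st := by
      have hsub : supp h ⊆ S ∪ (Sᶜ.filter (fun i => x i ≠ 0))
          ∪ (Sᶜ.filter (fun i => xstar i ≠ 0)) := by
        intro i hi
        simp only [supp, Finset.mem_filter, Finset.mem_univ, true_and] at hi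
        by_cases hiS : i ∈ S
        · exact Finset.mem_union_left _ (Finset.mem_union_left _ hiS)
        · have hic : i ∈ Sᶜ := Finset.mem_compl.mpr hiS
          by_cases hxi : x i ≠ 0
          · exact Finset.mem_union_left _
              (Finset.mem_union_right _ (Finset.mem_filter.mpr ⟨hic, hxi⟩))
          · push_neg at hxi
            have : xstar i ≠ 0 := by
              intro hxs
              apply hi
              simp [hh, hxi, hxs]
            exact Finset.mem_union_right _ (Finset.mem_filter.mpr ⟨hic, this⟩)
      calc l0 h ≤ (S ∪ (Sᶜ.filter (fun i => x i ≠ 0))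
            ∪ (Sᶜ.filter (fun i => xstar i ≠ 0))).card := Finset.card_le_card hsub
        _ ≤ (S ∪ (Sᶜ.filter (fun i => x i ≠ 0))).card
            + (Sᶜ.filter (fun i => xstar i ≠ 0)).card := Finset.card_union_le _ _
        _ ≤ S.card + (Sᶜ.filter (fun i => x i ≠ 0)).card
            + (Sᶜ.filter (fun i => xstar i ≠ 0)).card := by
            linarith [Finset.card_union_le S (Sᶜ.filter (fun i => x i ≠ 0))]
        _ ≤ S.card + st + st := by
            have h1 : (Sᶜ.filter (fun i => x i ≠ 0)).card ≤ st := hx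
            have h2 : (Sᶜ.filter (fun i => xstar i ≠ 0)).card ≤ st := hsp
            omega
        _ = S.card + 2 * st := by omega
    have hmem : Q / sqnorm h ∈ {r | ∃ v : Fin n → ℝ, v ≠ 0 ∧ l0 v ≤ S.card + 2 * st
        ∧ r = sqnorm (A.mulVec v) / sqnorm v} := ⟨h, hz, hl0, by rw [hQ]⟩
    have hbdd : BddBelow {r | ∃ v : Fin n → ℝ, v ≠ 0 ∧ l0 v ≤ S.card + 2 * st
        ∧ r = sqnorm (A.mulVec v) / sqnorm v} := by
      refine ⟨0, fun r hr => ?_⟩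
      obtain ⟨v, _, _, rfl⟩ := hr
      exact div_nonneg (sqnorm_nonneg' _) (sqnorm_nonneg' _)
    have hrho : rhoMinus A (S.card + 2 * st) ≤ Q / sqnorm h :=
      csInf_le hbdd hmem
    have : rhoMinus A (S.card + 2 * st) / 2 * sqnorm h ≤ Q / 2 := by
      have := mul_le_mul_of_nonneg_right hrho hsq.le
      rw [div_mul_cancel₀ _ (ne_of_gt hsq)] at this
      linarith
    linarith

end PGH
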